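/- Let d ≥ 1, let X be a compact metric space, let f : X → X be a homeomorphism, let A be a continuous linear cocycle over f, and let P : X → (ℝ^d →L[ℝ] ℝ^d) be a continuous invariant splitting for A whose rank, rank(P(x)) = k ≥ 1, is constant in x; write E(x) = range P(x). Fix an integer m ≥ 1. If for every integer n ≥ 1 there exists x ∈ X with ‖A^{mn}(x)|E(x)‖ ≥ 1, then there exists p ∈ X such that the limit lim_{n→∞} (1/n) Σ_{ℓ=0}^{n−1} log ‖A^m(f^{mℓ} p)|E(f^{mℓ} p)‖ exists and is ≥ 0. -/

import Mathlib

open Filter Topology MeasureTheory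

noncomputable section

variable {X : Type*}

/-- Positive iterates of a linear cocycle: `cpow f A n x = A(f^{n-1}x) ∘ ⋯ ∘ A(x)`. -/
def cpow {d : ℕ} (f : X → X)
    (A : X → (EuclideanSpace ℝ (Fin d) →L[ℝ] EuclideanSpace ℝ (Fin d))) :
    ℕ → X → (EuclideanSpace ℝ (Fin d) →L[ℝ] EuclideanSpace ℝ (Fin d))
  | 0, _ => 1
  | n + 1, x => cpow f A n (f x) ∘L A x

/-- Iterates of the cocycle over `ℤ`, with `A^{-n}(x) = (A^n(f^{-n}x))⁻¹`. -/
def cIter {d : ℕ} [TopologicalSpace X] (f : X ≃ₜ X)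
    (A : X → (EuclideanSpace ℝ (Fin d) →L[ℝ] EuclideanSpace ℝ (Fin d)))
    (n : ℤ) (x : X) : EuclideanSpace ℝ (Fin d) →L[ℝ] EuclideanSpace ℝ (Fin d) :=
  if 0 ≤ n then cpow f A n.toNat x
  else Ring.inverse (cpow f A (-n).toNat ((f.symm : X → X)^[(-n).toNat] x))

/-- Operator norm of the restriction of `T` to the subspace `E`, i.e. `‖T|E‖`. -/
def subNorm {d : ℕ} (T : EuclideanSpace ℝ (Fin d) →L[ℝ] EuclideanSpace ℝ (Fin d))
    (E : Submodule ℝ (EuclideanSpace ℝ (Fin d))) : ℝ :=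
  ‖T ∘L E.subtypeL‖

variable {d : ℕ} {f : X → X} {A : X → (EuclideanSpace ℝ (Fin d) →L[ℝ] EuclideanSpace ℝ (Fin d))}

theorem cpow_add (a b : ℕ) (x : X) :
    cpow f A (a + b) x = cpow f A b (f^[a] x) ∘L cpow f A a x := by
  induction a generalizing x with
  | zero => simp [cpow, ContinuousLinearMap.one_def]
  | succ a ih =>
    have : a + 1 + b = (a + b) + 1 := by omega
    rw [this]
    show cpow f A (a + b) (f x) ∘L A x = _
    rw [ih (f x)]
    simp [cpow, Function.iterate_succ_apply, ContinuousLinearMap.comp_assoc]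

theorem cpow_isUnit (hA : ∀ x, IsUnit (A x)) (n : ℕ) (x : X) :
    IsUnit (cpow f A n x) := by
  induction n generalizing x with
  | zero => exact isUnit_one
  | succ n ih =>
    show IsUnit (cpow f A n (f x) ∘L A x)
    exact (ih (f x)).mul (hA x)

theorem cpow_continuous [TopologicalSpace X] (hf : Continuous f) (hA : Continuous A) (n : ℕ) :
    Continuous (fun x => cpow f A n x) := by
  induction n with
  | zero => exact continuous_const
  | succ n ih =>
    show Continuous (fun x => cpow f A n (f x) ∘L A x)
    exact (ih.comp hf).clm_comp hA

theorem cpow_proj {P : X → (EuclideanSpace ℝ (Fin d) →L[ℝ] EuclideanSpace ℝ (Fin d))}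
    (hPinv : ∀ x, A x ∘L P x = P (f x) ∘L A x) (n : ℕ) (x : X) :
    cpow f A n x ∘L P x = P (f^[n] x) ∘L cpow f A n x := by
  induction n generalizing x with
  | zero => simp [cpow, ContinuousLinearMap.one_def]
  | succ n ih =>
    show (cpow f A n (f x) ∘L A x) ∘L P x = P (f^[n+1] x) ∘L (cpow f A n (f x) ∘L A x)
    rw [ContinuousLinearMap.comp_assoc, hPinv x, ← ContinuousLinearMap.comp_assoc,
      ih (f x), Function.iterate_succ_apply, ContinuousLinearMap.comp_assoc]

theorem subNorm_nonneg (T : EuclideanSpace ℝ (Fin d) →L[ℝ] EuclideanSpace ℝ (Fin d))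
    (E : Submodule ℝ (EuclideanSpace ℝ (Fin d))) : 0 ≤ subNorm T E := by
  exact norm_nonneg (T ∘L E.subtypeL)

theorem subNorm_apply_le (T : EuclideanSpace ℝ (Fin d) →L[ℝ] EuclideanSpace ℝ (Fin d))
    (E : Submodule ℝ (EuclideanSpace ℝ (Fin d))) {v : EuclideanSpace ℝ (Fin d)} (hv : v ∈ E) :
    ‖T v‖ ≤ subNorm T E * ‖v‖ := by
  have := (T ∘L E.subtypeL).le_opNorm ⟨v, hv⟩
  simpa [subNorm] using this

theorem subNorm_comp_le {T S : EuclideanSpace ℝ (Fin d) →L[ℝ] EuclideanSpace ℝ (Fin d)}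
    {E E' : Submodule ℝ (EuclideanSpace ℝ (Fin d))}
    (hS : ∀ v ∈ E, S v ∈ E') :
    subNorm (T ∘L S) E ≤ subNorm T E' * subNorm S E := by
  apply ContinuousLinearMap.opNorm_le_bound _
    (mul_nonneg (subNorm_nonneg T E') (subNorm_nonneg S E))
  rintro ⟨v, hv⟩
  have h1 : ‖T (S v)‖ ≤ subNorm T E' * ‖S v‖ := subNorm_apply_le T E' (hS v hv)
  have h2 : ‖S v‖ ≤ subNorm S E * ‖v‖ := subNorm_apply_le S E hv
  have hnorm : ‖(⟨v, hv⟩ : E)‖ = ‖v‖ := rfl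
  show ‖T (S v)‖ ≤ _ * ‖(⟨v, hv⟩ : E)‖
  rw [hnorm, mul_assoc]
  exact h1.trans (mul_le_mul_of_nonneg_left h2 (subNorm_nonneg T E'))

theorem subNorm_pos {T : EuclideanSpace ℝ (Fin d) →L[ℝ] EuclideanSpace ℝ (Fin d)}
    {E : Submodule ℝ (EuclideanSpace ℝ (Fin d))}
    (hT : IsUnit T) (hE : E ≠ ⊥) : 0 < subNorm T E := by
  obtain ⟨v, hv, hv0⟩ := Submodule.ne_bot_iff E |>.mp hE
  obtain ⟨u, hu⟩ := hT
  have hinj : T v ≠ 0 := by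
    intro h
    apply hv0
    have h0 : (↑u⁻¹ * ↑u : EuclideanSpace ℝ (Fin d) →L[ℝ] EuclideanSpace ℝ (Fin d)) v = v := by
      rw [u.inv_mul]; rfl
    rw [ContinuousLinearMap.mul_apply, hu, h, map_zero] at h0
    exact h0.symm
  have h1 : 0 < ‖T v‖ := norm_pos_iff.mpr hinj
  have h2 := subNorm_apply_le T E hv
  nlinarith [norm_nonneg v, norm_pos_iff.mpr hv0, subNorm_nonneg T E]

theorem subNorm_quant {T T' P P' : EuclideanSpace ℝ (Fin d) →L[ℝ] EuclideanSpace ℝ (Fin d)}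
    (hP : P ∘L P = P) (hP' : P' ∘L P' = P') :
    subNorm T' (LinearMap.range P'.toLinearMap) ≤
      subNorm T (LinearMap.range P.toLinearMap) * (1 + ‖P' - P‖) + ‖T‖ * ‖P' - P‖ + ‖T' - T‖ := by
  set E := LinearMap.range P.toLinearMap
  set E' := LinearMap.range P'.toLinearMap
  have hsn := subNorm_nonneg T E
  apply ContinuousLinearMap.opNorm_le_bound
  · positivity
  rintro ⟨v, hv⟩
  show ‖T' v‖ ≤ _ * ‖(⟨v, hv⟩ : E')‖
  have hnorm : ‖(⟨v, hv⟩ : E')‖ = ‖v‖ := rfl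
  rw [hnorm]
  -- v = P' v
  have hvP : P' v = v := by
    obtain ⟨w, rfl⟩ := hv
    have := congrArg (fun S : EuclideanSpace ℝ (Fin d) →L[ℝ] EuclideanSpace ℝ (Fin d) => S w) hP'
    exact this
  have hw : P v ∈ E := LinearMap.mem_range_self _ v
  have hvw : ‖v - P v‖ ≤ ‖P' - P‖ * ‖v‖ := by
    calc ‖v - P v‖ = ‖(P' - P) v‖ := by rw [ContinuousLinearMap.sub_apply, hvP]
      _ ≤ ‖P' - P‖ * ‖v‖ := (P' - P).le_opNorm v
  have h1 : ‖T (P v)‖ ≤ subNorm T E * ‖P v‖ := subNorm_apply_le T E hw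
  have hPv : ‖P v‖ ≤ (1 + ‖P' - P‖) * ‖v‖ := by
    calc ‖P v‖ ≤ ‖v‖ + ‖v - P v‖ := by
          have := norm_sub_norm_le (P v) v
          have h := norm_add_le (v - P v) (P v)
          simp only [sub_add_cancel] at h
          linarith [norm_sub_rev v (P v)]
      _ ≤ ‖v‖ + ‖P' - P‖ * ‖v‖ := by linarith
      _ = (1 + ‖P' - P‖) * ‖v‖ := by ring
  calc ‖T' v‖ ≤ ‖T v‖ + ‖(T' - T) v‖ := by
        have := norm_add_le (T v) ((T' - T) v)
        simpa [ContinuousLinearMap.sub_apply] using this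
    _ ≤ (‖T (P v)‖ + ‖T (v - P v)‖) + ‖T' - T‖ * ‖v‖ := by
        have h3 : ‖T v‖ ≤ ‖T (P v)‖ + ‖T (v - P v)‖ := by
          have := norm_add_le (T (P v)) (T (v - P v))
          have he : T (P v) + T (v - P v) = T v := by rw [← map_add]; congr 1; abel
          rw [he] at this; exact this
        have h4 := (T' - T).le_opNorm v
        linarith
    _ ≤ (subNorm T E * ((1 + ‖P' - P‖) * ‖v‖) + ‖T‖ * (‖P' - P‖ * ‖v‖)) + ‖T' - T‖ * ‖v‖ := by
        have h5 : ‖T (v - P v)‖ ≤ ‖T‖ * (‖P' - P‖ * ‖v‖) := by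
          have := T.le_opNorm (v - P v)
          nlinarith [norm_nonneg (T : EuclideanSpace ℝ (Fin d) →L[ℝ] EuclideanSpace ℝ (Fin d)), norm_nonneg (v - P v)]
        have h6 : ‖T (P v)‖ ≤ subNorm T E * ((1 + ‖P' - P‖) * ‖v‖) := by
          nlinarith [norm_nonneg (P v)]
        linarith
    _ = (subNorm T E * (1 + ‖P' - P‖) + ‖T‖ * ‖P' - P‖ + ‖T' - T‖) * ‖v‖ := by ring

theorem subNorm_usc [TopologicalSpace X]
    {T P : X → (EuclideanSpace ℝ (Fin d) →L[ℝ] EuclideanSpace ℝ (Fin d))}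
    (hT : Continuous T) (hP : Continuous P) (hPproj : ∀ x, P x ∘L P x = P x) :
    UpperSemicontinuous (fun x => subNorm (T x) (LinearMap.range (P x).toLinearMap)) := by
  intro x₀ y hy
  set F : X → ℝ := fun x => subNorm (T x₀) (LinearMap.range (P x₀).toLinearMap) * (1 + ‖P x - P x₀‖)
    + ‖T x₀‖ * ‖P x - P x₀‖ + ‖T x - T x₀‖ with hF
  have hFcont : Continuous F := by
    apply Continuous.add
    apply Continuous.add
    · exact continuous_const.mul (continuous_const.add ((hP.sub continuous_const).norm))
    · exact continuous_const.mul ((hP.sub continuous_const).norm)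
    · exact (hT.sub continuous_const).norm
  have hFx₀ : F x₀ = subNorm (T x₀) (LinearMap.range (P x₀).toLinearMap) := by
    simp only [hF, sub_self, norm_zero, mul_zero, add_zero, mul_one]
  have hle : ∀ x, subNorm (T x) (LinearMap.range (P x).toLinearMap) ≤ F x := fun x =>
    subNorm_quant (hPproj x₀) (hPproj x)
  have : ∀ᶠ x in 𝓝 x₀, F x < y := by
    have := hFcont.continuousAt (x := x₀)
    exact this.eventually_lt continuousAt_const (by rw [hFx₀]; exact hy)
  filter_upwards [this] with x hx
  exact lt_of_le_of_lt (hle x) hx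

theorem log_usc [TopologicalSpace X] {u : X → ℝ} (hu : UpperSemicontinuous u)
    (hpos : ∀ x, 0 < u x) : UpperSemicontinuous (fun x => Real.log (u x)) := by
  intro x₀ y hy
  have h1 : u x₀ < Real.exp y := by
    have := Real.exp_log (hpos x₀)
    calc u x₀ = Real.exp (Real.log (u x₀)) := this.symm
      _ < Real.exp y := Real.exp_lt_exp.mpr hy
  filter_upwards [hu x₀ _ h1] with x hx
  calc Real.log (u x) < Real.log (Real.exp y) := Real.log_lt_log (hpos x) hx
    _ = y := Real.log_exp y

set_option maxHeartbeats 2000000 in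
theorem key_top [TopologicalSpace X] [CompactSpace X] [Nonempty X]
    (g : X → X) (hg : Continuous g) (φ : X → ℝ) (hφ : UpperSemicontinuous φ)
    (B : ℝ) (hB : ∀ x, φ x ≤ B)
    (hsup : ∀ n : ℕ, 1 ≤ n → ∃ x, 0 ≤ ∑ l ∈ Finset.range n, φ (g^[l] x)) :
    ∃ p : X, ∃ L : ℝ, 0 ≤ L ∧
      Tendsto (fun n : ℕ => (1 / (n : ℝ)) * ∑ l ∈ Finset.range n, φ (g^[l] p))
        atTop (𝓝 L) := by
  set S : ℕ → X → ℝ := fun n x => ∑ l ∈ Finset.range n, φ (g^[l] x) with hSdef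
  have hS_zero : ∀ x, S 0 x = 0 := fun x => by simp [hSdef]
  have hS_succ : ∀ n x, S (n + 1) x = S n x + φ (g^[n] x) := fun n x => by
    simp [hSdef, Finset.sum_range_succ]
  have hS_add : ∀ a b x, S (a + b) x = S a x + S b (g^[a] x) := by
    intro a b
    induction b with
    | zero => intro x; simp [hS_zero]
    | succ b ih =>
      intro x
      have h1 : a + (b + 1) = (a + b) + 1 := by omega
      rw [h1, hS_succ, ih x, hS_succ, add_assoc]
      congr 2
      rw [Nat.add_comm a b, Function.iterate_add_apply]
  have hSusc : ∀ n, UpperSemicontinuous (S n) := by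
    intro n
    apply upperSemicontinuous_sum
    intro l _
    exact UpperSemicontinuous.comp hφ (hg.iterate l)
  have hSle : ∀ n x, S n x ≤ n * B := by
    intro n x
    calc S n x ≤ ∑ l ∈ Finset.range n, B := Finset.sum_le_sum (fun l _ => hB _)
      _ = n * B := by simp [mul_comm]
  have hbdd : ∀ n, BddAbove (Set.range (S n)) := by
    intro n
    exact ⟨n * B, by rintro y ⟨x, rfl⟩; exact hSle n x⟩
  set a : ℕ → ℝ := fun n => sSup (Set.range (S n)) with hadef
  have haub : ∀ n x, S n x ≤ a n := fun n x => le_csSup (hbdd n) ⟨x, rfl⟩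
  have ha_nonneg : ∀ n, 1 ≤ n → 0 ≤ a n := by
    intro n hn
    obtain ⟨x, hx⟩ := hsup n hn
    exact le_trans hx (haub n x)
  have hbddB : BddBelow (Set.range (fun n : ℕ => a (n + 1) / (n + 1 : ℝ))) := by
    refine ⟨0, ?_⟩
    rintro y ⟨n, rfl⟩
    exact div_nonneg (ha_nonneg (n + 1) (by omega)) (by positivity)
  set α : ℝ := ⨅ n : ℕ, a (n + 1) / (n + 1 : ℝ) with hαdef
  have hα_nonneg : 0 ≤ α := by
    apply le_ciInf
    intro n
    exact div_nonneg (ha_nonneg (n + 1) (by omega)) (by positivity)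
  have hα_le : ∀ N : ℕ, α ≤ a (N + 1) / (N + 1 : ℝ) := fun N => ciInf_le hbddB N
  have ha_ge : ∀ n : ℕ, 1 ≤ n → (n : ℝ) * α ≤ a n := by
    intro n hn
    obtain ⟨N, rfl⟩ := Nat.exists_eq_add_of_le hn
    have := hα_le N
    have hpos : (0 : ℝ) < (N + 1 : ℝ) := by positivity
    rw [le_div_iff₀ hpos] at this
    calc ((1 + N : ℕ) : ℝ) * α = α * ((N : ℝ) + 1) := by push_cast; ring
      _ ≤ a (N + 1) := this
      _ = a (1 + N) := by rw [Nat.add_comm]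
  -- Lemma A : there is a point all of whose Birkhoff sums dominate n·α
  have lemmaA : ∃ p : X, ∀ n : ℕ, (n : ℝ) * α ≤ S n p := by
    by_contra hcon
    push_neg at hcon
    -- choose for each p a time and a gap
    have hchoice : ∀ p : X, ∃ n : ℕ, ∃ δ : ℝ, 0 < δ ∧ 1 ≤ n ∧ S n p < n * α - δ := by
      intro p
      obtain ⟨n, hn⟩ := hcon p
      have hn1 : 1 ≤ n := by
        rcases Nat.eq_zero_or_pos n with h | h
        · exfalso; rw [h] at hn; simp [hS_zero] at hn
        · exact h
      exact ⟨n, (n * α - S n p) / 2, by linarith, hn1, by linarith⟩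
    choose nn δδ hδpos hnn1 hlt using hchoice
    -- open cover
    set U : X → Set X := fun p => (S (nn p)) ⁻¹' (Set.Iio ((nn p) * α - δδ p)) with hU
    have hUopen : ∀ p, IsOpen (U p) := fun p => (hSusc (nn p)).isOpen_preimage _
    have hUcover : Set.univ ⊆ ⋃ p : X, U p := by
      intro x _
      exact Set.mem_iUnion.mpr ⟨x, hlt x⟩
    obtain ⟨t, ht⟩ := isCompact_univ.elim_finite_subcover U hUopen hUcover
    have htne : t.Nonempty := by
      by_contra h
      rw [Finset.not_nonempty_iff_eq_empty] at h
      obtain ⟨x⟩ := ‹Nonempty X›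
      have := ht (Set.mem_univ x)
      simp [h] at this
    set K : ℕ := t.sup nn with hK
    have hK1 : 1 ≤ K := by
      obtain ⟨p, hp⟩ := htne
      exact le_trans (hnn1 p) (Finset.le_sup hp)
    obtain ⟨δ, hδ⟩ : ∃ δ : ℝ, 0 < δ ∧ ∀ p ∈ t, δ ≤ δδ p := by
      obtain ⟨p₀, hp₀, hmin⟩ := t.exists_min_image δδ htne
      exact ⟨δδ p₀, hδpos p₀, fun p hp => hmin p hp⟩
    -- every point admits a short block with definite decrease
    have hblock : ∀ x : X, ∃ k : ℕ, 1 ≤ k ∧ k ≤ K ∧ S k x ≤ k * α - δ := by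
      intro x
      have hx' : ∃ p ∈ t, x ∈ U p := by simpa using ht (Set.mem_univ x)
      obtain ⟨p, hp, hxp⟩ := hx'
      refine ⟨nn p, hnn1 p, Finset.le_sup hp, ?_⟩
      have : S (nn p) x < (nn p) * α - δδ p := hxp
      have := hδ.2 p hp
      linarith
    -- uniform drift bound
    set Bp : ℝ := |B| + |α| + 1 with hBp
    have hBp_pos : 0 < Bp := by positivity
    have hψle : ∀ x, φ x - α ≤ Bp := by
      intro x
      have := hB x
      have h1 : B ≤ |B| := le_abs_self B
      have h2 : -α ≤ |α| := neg_le_abs α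
      linarith
    set C : ℝ := K * (Bp + δ) with hC
    have main : ∀ n : ℕ, ∀ x : X, S n x ≤ n * α + (C - (δ / K) * n) := by
      intro n
      induction n using Nat.strong_induction_on with
      | _ n ih =>
        intro x
        by_cases hn : n < K
        · -- short case
          have h1 : S n x - n * α ≤ n * Bp := by
            have : S n x ≤ n * (α + Bp) := by
              calc S n x ≤ ∑ l ∈ Finset.range n, (α + Bp) :=
                Finset.sum_le_sum (fun l _ => by have := hψle (g^[l] x); linarith)
                _ = n * (α + Bp) := by rw [Finset.sum_const, Finset.card_range, nsmul_eq_mul]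
            nlinarith
          have hKr : (n : ℝ) < K := by exact_mod_cast hn
          have hKpos : (0 : ℝ) < K := by
            have : (1 : ℝ) ≤ K := by exact_mod_cast hK1
            linarith
          have h2 : (δ / K) * n ≤ δ := by
            rw [div_mul_eq_mul_div, div_le_iff₀ hKpos]
            nlinarith
          have h3 : (n : ℝ) * Bp ≤ K * Bp := by nlinarith
          have hδK1 : (1:ℝ) ≤ K := by exact_mod_cast hK1
          nlinarith [hδ.1]
        · -- long case: chop off a block
          push_neg at hn
          obtain ⟨k, hk1, hkK, hkdec⟩ := hblock x
          have hkn : k ≤ n := le_trans hkK hn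
          obtain ⟨r, hr⟩ := Nat.exists_eq_add_of_le hkn
          have hrlt : r < n := by omega
          have hsplit : S n x = S k x + S r (g^[k] x) := by rw [hr]; exact hS_add k r x
          have hih := ih r hrlt (g^[k] x)
          have hKpos : (0 : ℝ) < K := by
            have : (1 : ℝ) ≤ K := by exact_mod_cast hK1
            linarith
          have hδk : (δ / K) * k ≤ δ := by
            rw [div_mul_eq_mul_div, div_le_iff₀ hKpos]
            have : (k : ℝ) ≤ K := by exact_mod_cast hkK
            nlinarith [hδ.1]
          have hcast : (n : ℝ) = (k : ℝ) + (r : ℝ) := by rw [hr]; push_cast; ring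
          rw [hsplit, hcast]
          have := hδ.1
          nlinarith
    -- contradiction for large n
    have hKpos : (0 : ℝ) < K := by
      have : (1 : ℝ) ≤ K := by exact_mod_cast hK1
      linarith
    obtain ⟨n, hn1, hnbig⟩ : ∃ n : ℕ, 1 ≤ n ∧ C - (δ / K) * n < -1 := by
      obtain ⟨n, hnn⟩ := exists_nat_gt ((C + 1) * K / δ)
      refine ⟨max n 1, le_max_right n 1, ?_⟩
      have h1 : ((C + 1) * K / δ) < (max n 1 : ℕ) := by
        have : (n : ℝ) ≤ ((max n 1 : ℕ) : ℝ) := by exact_mod_cast le_max_left n 1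
        linarith
      rw [div_lt_iff₀ hδ.1] at h1
      have h2 : C + 1 < (δ / K) * (max n 1 : ℕ) := by
        rw [div_mul_eq_mul_div, lt_div_iff₀ hKpos]
        nlinarith
      linarith
    obtain ⟨y, hy⟩ : ∃ y : X, (n : ℝ) * α - 1 < S n y := by
      have h1 : (n : ℝ) * α - 1 < a n := by
        have := ha_ge n hn1
        linarith
      obtain ⟨z, hz, hlt'⟩ := exists_lt_of_lt_csSup (Set.range_nonempty (S n)) h1
      obtain ⟨y, rfl⟩ := hz
      exact ⟨y, hlt'⟩
    have := main n y
    linarith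
  obtain ⟨p, hp⟩ := lemmaA
  refine ⟨p, α, hα_nonneg, ?_⟩
  set Bp : ℝ := max B 0 with hBp
  have hBp0 : 0 ≤ Bp := le_max_right _ _
  have hBBp : ∀ x, φ x ≤ Bp := fun x => le_trans (hB x) (le_max_left _ _)
  have hSleBp : ∀ n x, S n x ≤ n * Bp := by
    intro n x
    calc S n x ≤ ∑ l ∈ Finset.range n, Bp := Finset.sum_le_sum (fun l _ => hBBp _)
      _ = n * Bp := by rw [Finset.sum_const, Finset.card_range, nsmul_eq_mul]
  have hup : ∀ N' q r : ℕ, ∀ x, S (q * N' + r) x ≤ q * a N' + r * Bp := by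
    intro N' q
    induction q with
    | zero =>
      intro r x
      have := hSleBp r x
      simpa using this
    | succ q ih =>
      intro r x
      have hsplit : (q + 1) * N' + r = N' + (q * N' + r) := by ring
      rw [hsplit, hS_add]
      have h1 := ih r (g^[N'] x)
      have h2 := haub N' x
      push_cast
      push_cast at h1
      nlinarith
  rw [Metric.tendsto_atTop]
  intro ε hε
  have hα' : (⨅ n : ℕ, a (n + 1) / (n + 1 : ℝ)) < α + ε / 2 := by
    rw [← hαdef]; linarith
  obtain ⟨N, hN⟩ := exists_lt_of_ciInf_lt hα'
  set N' : ℕ := N + 1 with hN'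
  have hN'pos : (0 : ℝ) < (N' : ℝ) := by positivity
  have hNcast : ((N' : ℕ) : ℝ) = (N : ℝ) + 1 := by simp [hN']
  have hN2 : a N' / (N' : ℝ) < α + ε / 2 := by rw [hNcast]; exact hN
  have haN0 : 0 ≤ a N' := ha_nonneg N' (by omega)
  obtain ⟨M, hM⟩ := exists_nat_gt (2 * (N' : ℝ) * Bp / ε)
  refine ⟨max M 1, fun n hn => ?_⟩
  have hn1 : 1 ≤ n := le_trans (le_max_right M 1) hn
  have hnM : M ≤ n := le_trans (le_max_left M 1) hn
  have hnR : (1 : ℝ) ≤ (n : ℝ) := by exact_mod_cast hn1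
  have hnpos : (0 : ℝ) < (n : ℝ) := by linarith
  set q : ℕ := n / N' with hq
  set r : ℕ := n % N' with hr
  have hqr : q * N' + r = n := by
    rw [hq, hr, mul_comm]
    exact Nat.div_add_mod n N'
  have hSb : S n p ≤ q * a N' + r * Bp := by
    have := hup N' q r p
    rwa [hqr] at this
  have hql : (q : ℝ) * (N' : ℝ) ≤ (n : ℝ) := by
    have : q * N' ≤ n := by omega
    exact_mod_cast this
  have hrl : (r : ℝ) ≤ (N' : ℝ) := by
    have : r < N' := Nat.mod_lt n (by omega)
    exact_mod_cast this.le
  -- lower bound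
  have hlow : α ≤ (1 / (n : ℝ)) * S n p := by
    have h := hp n
    have := mul_le_mul_of_nonneg_left h (le_of_lt (one_div_pos.mpr hnpos))
    calc α = (1 / (n : ℝ)) * ((n : ℝ) * α) := by field_simp
      _ ≤ (1 / (n : ℝ)) * S n p := this
  -- upper bound
  have h2 : (q : ℝ) * a N' ≤ (n : ℝ) * (a N' / (N' : ℝ)) := by
    have e : (n : ℝ) * (a N' / (N' : ℝ)) = ((n : ℝ) / (N' : ℝ)) * a N' := by ring
    rw [e]
    apply mul_le_mul_of_nonneg_right _ haN0
    rw [le_div_iff₀ hN'pos]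
    exact hql
  have h3 : (r : ℝ) * Bp ≤ (N' : ℝ) * Bp := mul_le_mul_of_nonneg_right hrl hBp0
  have hupper : (1 / (n : ℝ)) * S n p ≤ a N' / (N' : ℝ) + (N' : ℝ) * Bp / (n : ℝ) := by
    have hc : S n p ≤ (n : ℝ) * (a N' / (N' : ℝ)) + (N' : ℝ) * Bp := by linarith
    have := mul_le_mul_of_nonneg_left hc (le_of_lt (one_div_pos.mpr hnpos))
    calc (1 / (n : ℝ)) * S n p ≤ (1 / (n : ℝ)) * ((n : ℝ) * (a N' / (N' : ℝ)) + (N' : ℝ) * Bp) := this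
      _ = a N' / (N' : ℝ) + (N' : ℝ) * Bp / (n : ℝ) := by
        have hne : (n : ℝ) ≠ 0 := ne_of_gt hnpos
        rw [mul_add, ← mul_assoc, one_div, inv_mul_cancel₀ hne, one_mul, inv_mul_eq_div]
  have h4 : (N' : ℝ) * Bp / (n : ℝ) < ε / 2 := by
    have hMn : 2 * (N' : ℝ) * Bp / ε < (n : ℝ) := by
      have : (M : ℝ) ≤ (n : ℝ) := by exact_mod_cast hnM
      linarith
    rw [div_lt_iff₀ hε] at hMn
    rw [div_lt_iff₀ hnpos]
    nlinarith
  rw [Real.dist_eq, abs_of_nonneg (by linarith)]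
  have := hN2
  linarith

set_option maxHeartbeats 1000000 in
theorem exists_point_nonneg_average' {d : ℕ} (hd : 1 ≤ d) [MetricSpace X] [CompactSpace X]
    (f : X ≃ₜ X)
    (A : X → (EuclideanSpace ℝ (Fin d) →L[ℝ] EuclideanSpace ℝ (Fin d)))
    (hAcont : Continuous A) (hAinv : ∀ x, IsUnit (A x))
    (P : X → (EuclideanSpace ℝ (Fin d) →L[ℝ] EuclideanSpace ℝ (Fin d)))
    (hPcont : Continuous P)
    (hPproj : ∀ x, P x ∘L P x = P x)
    (hPinv : ∀ x, A x ∘L P x = P (f x) ∘L A x)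
    (k : ℕ) (hk1 : 1 ≤ k)
    (hrank : ∀ x, Module.finrank ℝ (LinearMap.range (P x).toLinearMap) = k)
    (m : ℕ) (hm : 1 ≤ m)
    (hnc : ∀ n : ℕ, 1 ≤ n → ∃ x : X,
      1 ≤ subNorm (cpow (f : X → X) A (m * n) x) (LinearMap.range (P x).toLinearMap)) :
    ∃ p : X, ∃ L : ℝ, 0 ≤ L ∧
      Filter.Tendsto (fun n : ℕ => (1 / (n : ℝ)) *
        ∑ l ∈ Finset.range n,
          Real.log (subNorm (cpow (f : X → X) A m ((f : X → X)^[m * l] p))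
            (LinearMap.range (P ((f : X → X)^[m * l] p)).toLinearMap)))
        Filter.atTop (𝓝 L) := by
  set Φ : ℕ → X → ℝ := fun n x => subNorm (cpow (f : X → X) A n x) (LinearMap.range (P x).toLinearMap)
    with hΦ
  have hEne : ∀ x, LinearMap.range (P x).toLinearMap ≠ ⊥ := by
    intro x h
    have := hrank x
    rw [h, finrank_bot] at this
    omega
  have hΦpos : ∀ n x, 0 < Φ n x := fun n x =>
    subNorm_pos (cpow_isUnit hAinv n x) (hEne x)
  have hmaps : ∀ (n : ℕ) (x : X), ∀ v ∈ LinearMap.range (P x).toLinearMap,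
      cpow (f : X → X) A n x v ∈ LinearMap.range (P ((f : X → X)^[n] x)).toLinearMap := by
    intro n x v hv
    have hvP : P x v = v := by
      obtain ⟨w, rfl⟩ := hv
      exact congrArg (fun S : EuclideanSpace ℝ (Fin d) →L[ℝ] EuclideanSpace ℝ (Fin d) => S w)
        (hPproj x)
    have := congrArg
      (fun S : EuclideanSpace ℝ (Fin d) →L[ℝ] EuclideanSpace ℝ (Fin d) => S v)
      (cpow_proj hPinv n x)
    simp only [ContinuousLinearMap.comp_apply] at this
    rw [hvP] at this
    exact ⟨cpow (f : X → X) A n x v, by exact this.symm⟩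
  -- the submultiplicative estimate along blocks of length m
  have hprod : ∀ (n : ℕ) (x : X),
      Φ (m * n) x ≤ ∏ l ∈ Finset.range n, Φ m ((f : X → X)^[m * l] x) := by
    intro n
    induction n with
    | zero =>
      intro x
      simp only [Nat.mul_zero, Finset.range_zero, Finset.prod_empty]
      show subNorm (cpow (f : X → X) A 0 x) _ ≤ 1
      have : cpow (f : X → X) A 0 x = 1 := rfl
      rw [this]
      calc subNorm 1 (LinearMap.range (P x).toLinearMap)
          = ‖(1 : EuclideanSpace ℝ (Fin d) →L[ℝ] EuclideanSpace ℝ (Fin d)) ∘L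
              (LinearMap.range (P x).toLinearMap).subtypeL‖ := rfl
        _ = ‖(LinearMap.range (P x).toLinearMap).subtypeL‖ := by
            rw [ContinuousLinearMap.one_def, ContinuousLinearMap.id_comp]
        _ ≤ 1 := Submodule.norm_subtypeL_le _
    | succ n ih =>
      intro x
      have hsplit : m * (n + 1) = m * n + m := by ring
      have hc : cpow (f : X → X) A (m * (n + 1)) x =
          cpow (f : X → X) A m ((f : X → X)^[m * n] x) ∘L cpow (f : X → X) A (m * n) x := by
        rw [hsplit]; exact cpow_add (m * n) m x
      have h1 : Φ (m * (n + 1)) x ≤ Φ m ((f : X → X)^[m * n] x) * Φ (m * n) x := by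
        rw [hΦ]
        simp only
        rw [hc]
        exact subNorm_comp_le (hmaps (m * n) x)
      calc Φ (m * (n + 1)) x ≤ Φ m ((f : X → X)^[m * n] x) * Φ (m * n) x := h1
        _ ≤ Φ m ((f : X → X)^[m * n] x) * ∏ l ∈ Finset.range n, Φ m ((f : X → X)^[m * l] x) :=
            mul_le_mul_of_nonneg_left (ih x) (le_of_lt (hΦpos m _))
        _ = ∏ l ∈ Finset.range (n + 1), Φ m ((f : X → X)^[m * l] x) := by
            rw [Finset.prod_range_succ, mul_comm]
  -- nonemptiness
  obtain ⟨x₀, _⟩ := hnc 1 le_rfl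
  haveI : Nonempty X := ⟨x₀⟩
  -- the potential
  set φ : X → ℝ := fun x => Real.log (Φ m x) with hφdef
  set g : X → X := (f : X → X)^[m] with hg
  have hgiter : ∀ l x, g^[l] x = (f : X → X)^[m * l] x := by
    intro l x
    rw [hg, ← Function.iterate_mul]
  -- upper semicontinuity
  have hTm : Continuous (fun x => cpow (f : X → X) A m x) :=
    cpow_continuous f.continuous hAcont m
  have hΦusc : UpperSemicontinuous (Φ m) := subNorm_usc hTm hPcont hPproj
  have hφusc : UpperSemicontinuous φ := log_usc hΦusc (hΦpos m)
  -- boundedness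
  obtain ⟨z, _, hz'⟩ := isCompact_univ.exists_isMaxOn Set.univ_nonempty hTm.norm.continuousOn
  have hz : ∀ x : X, ‖cpow (f : X → X) A m x‖ ≤ ‖cpow (f : X → X) A m z‖ :=
    fun x => hz' (Set.mem_univ x)
  have hφB : ∀ x, φ x ≤ Real.log (‖cpow (f : X → X) A m z‖ + 1) := by
    intro x
    apply Real.log_le_log (hΦpos m x)
    have h1 : Φ m x ≤ ‖cpow (f : X → X) A m x‖ := by
      calc Φ m x = ‖cpow (f : X → X) A m x ∘L (LinearMap.range (P x).toLinearMap).subtypeL‖ := rfl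
        _ ≤ ‖cpow (f : X → X) A m x‖ * ‖(LinearMap.range (P x).toLinearMap).subtypeL‖ :=
            ContinuousLinearMap.opNorm_comp_le _ _
        _ ≤ ‖cpow (f : X → X) A m x‖ * 1 := by
            exact mul_le_mul_of_nonneg_left (Submodule.norm_subtypeL_le _)
              (norm_nonneg _)
        _ = ‖cpow (f : X → X) A m x‖ := mul_one _
    have h2 := hz x
    linarith
  -- hypothesis of key_top
  have hsup : ∀ n : ℕ, 1 ≤ n → ∃ x, 0 ≤ ∑ l ∈ Finset.range n, φ (g^[l] x) := by
    intro n hn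
    obtain ⟨x, hx⟩ := hnc n hn
    refine ⟨x, ?_⟩
    have h1 : (0 : ℝ) ≤ Real.log (Φ (m * n) x) := Real.log_nonneg hx
    have h2 : Real.log (Φ (m * n) x) ≤
        Real.log (∏ l ∈ Finset.range n, Φ m ((f : X → X)^[m * l] x)) :=
      Real.log_le_log (hΦpos _ x) (hprod n x)
    have h3 : Real.log (∏ l ∈ Finset.range n, Φ m ((f : X → X)^[m * l] x)) =
        ∑ l ∈ Finset.range n, Real.log (Φ m ((f : X → X)^[m * l] x)) :=
      Real.log_prod (fun l _ => ne_of_gt (hΦpos m _))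
    have h4 : ∑ l ∈ Finset.range n, Real.log (Φ m ((f : X → X)^[m * l] x)) =
        ∑ l ∈ Finset.range n, φ (g^[l] x) := by
      apply Finset.sum_congr rfl
      intro l _
      rw [hφdef, hgiter l x]
    linarith [h2.trans_eq (h3.trans h4)]
  obtain ⟨p, L, hL, hTend⟩ := key_top g (f.continuous.iterate m) φ hφusc _ hφB hsup
  refine ⟨p, L, hL, ?_⟩
  have heq : (fun n : ℕ => (1 / (n : ℝ)) *
      ∑ l ∈ Finset.range n,
        Real.log (subNorm (cpow (f : X → X) A m ((f : X → X)^[m * l] p))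
          (LinearMap.range (P ((f : X → X)^[m * l] p)).toLinearMap))) =
      (fun n : ℕ => (1 / (n : ℝ)) * ∑ l ∈ Finset.range n, φ (g^[l] p)) := by
    funext n
    congr 1
    apply Finset.sum_congr rfl
    intro l _
    rw [hφdef, hgiter l p]
  rw [heq]
  exact hTend

/-- Inequality (2) in cocycle form: if for every `n` some point fails to contract
along `E` in `mn` steps, then there is a point `p` whose Birkhoff average of
`log ‖A^m|E‖` along the orbit of `f^m` exists and is nonnegative. -/
theorem exists_point_nonneg_average {d : ℕ} (hd : 1 ≤ d) [MetricSpace X] [CompactSpace X]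
    (f : X ≃ₜ X)
    (A : X → (EuclideanSpace ℝ (Fin d) →L[ℝ] EuclideanSpace ℝ (Fin d)))
    (hAcont : Continuous A) (hAinv : ∀ x, IsUnit (A x))
    (P : X → (EuclideanSpace ℝ (Fin d) →L[ℝ] EuclideanSpace ℝ (Fin d)))
    (hPcont : Continuous P)
    (hPproj : ∀ x, P x ∘L P x = P x)
    (hPinv : ∀ x, A x ∘L P x = P (f x) ∘L A x)
    (k : ℕ) (hk1 : 1 ≤ k)
    (hrank : ∀ x, Module.finrank ℝ (LinearMap.range (P x :
      EuclideanSpace ℝ (Fin d) →ₗ[ℝ] EuclideanSpace ℝ (Fin d))) = k)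
    (m : ℕ) (hm : 1 ≤ m)
    (hnc : ∀ n : ℕ, 1 ≤ n → ∃ x : X,
      1 ≤ subNorm (cIter f A ((m * n : ℕ) : ℤ) x) (LinearMap.range (P x :
        EuclideanSpace ℝ (Fin d) →ₗ[ℝ] EuclideanSpace ℝ (Fin d)))) :
    ∃ p : X, ∃ L : ℝ, 0 ≤ L ∧
      Filter.Tendsto (fun n : ℕ => (1 / (n : ℝ)) *
        ∑ l ∈ Finset.range n,
          Real.log (subNorm (cIter f A (m : ℤ) ((f : X → X)^[m * l] p))
            (LinearMap.range ((P ((f : X → X)^[m * l] p) :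
              EuclideanSpace ℝ (Fin d) →ₗ[ℝ] EuclideanSpace ℝ (Fin d))))))
        Filter.atTop (𝓝 L) := by
  have hconv : ∀ (n : ℕ) (x : X), cIter f A ((n : ℕ) : ℤ) x = cpow (f : X → X) A n x := by
    intro n x
    simp [cIter]
  have hnc' : ∀ n : ℕ, 1 ≤ n → ∃ x : X,
      1 ≤ subNorm (cpow (f : X → X) A (m * n) x) (LinearMap.range (P x).toLinearMap) := by
    intro n hn
    obtain ⟨x, hx⟩ := hnc n hn
    rw [hconv] at hx
    exact ⟨x, hx⟩
  obtain ⟨p, L, hL, hT⟩ := exists_point_nonneg_average' hd f A hAcont hAinv P hPcont hPproj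
    hPinv k hk1 hrank m hm hnc'
  refine ⟨p, L, hL, ?_⟩
  simpa only [hconv] using hT
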